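/- Let h ≥ 2, let (W_i)_{i=0}^{h-1} be a partition of the nonnegative integers into nonempty pairwise disjoint sets, and let (g_i)_{i=0}^∞ be a G-adic sequence. Then the set A = {0} ∪ ⋃_{i=0}^{h-1} A_G(W_i) is not a minimal asymptotic basis of order h: the proper subset A \ {0} is still an asymptotic basis of order h. -/
import Mathlib


open Finset

/-- A `𝒢`-adic sequence: strictly increasing, `g 0 = 1`, and `g i ∣ g (i+1)` for all `i`. -/
def GadicSeq (g : ℕ → ℕ) : Prop :=
  StrictMono g ∧ g 0 = 1 ∧ ∀ i, g i ∣ g (i + 1)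

/-- The set `A_𝒢(W)` of positive integers `∑_{j ∈ F} x j * g j` with `F` a nonempty finite
subset of `W` and `x j ∈ [1, d_{j+1} - 1]` where `d_{j+1} = g (j+1) / g j`. -/
def AG (g : ℕ → ℕ) (W : Set ℕ) : Set ℕ :=
  { n | ∃ (F : Finset ℕ) (x : ℕ → ℕ), F.Nonempty ∧ ↑F ⊆ W ∧
        (∀ j ∈ F, 1 ≤ x j ∧ x j ≤ g (j + 1) / g j - 1) ∧
        n = ∑ j ∈ F, x j * g j }

/-- `n` is a sum of `h` (not necessarily distinct) elements of `A`. -/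
def IsSumOf (A : Set ℕ) (h n : ℕ) : Prop :=
  ∃ f : Fin h → ℕ, (∀ i, f i ∈ A) ∧ n = ∑ i, f i

/-- `A` is an asymptotic basis of order `h`. -/
def AsympBasis (h : ℕ) (A : Set ℕ) : Prop :=
  ∃ N, ∀ n ≥ N, IsSumOf A h n

/-- `A` is a minimal asymptotic basis of order `h`. -/
def MinAsympBasis (h : ℕ) (A : Set ℕ) : Prop :=
  AsympBasis h A ∧ ∀ B ⊂ A, ¬ AsympBasis h B

section helpers
variable {g : ℕ → ℕ}

lemma g_pos (hg : GadicSeq g) (j : ℕ) : 1 ≤ g j := by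
  have h1 := hg.1.monotone (Nat.zero_le j)
  have h2 := hg.2.1
  omega

lemma d_two (hg : GadicSeq g) (j : ℕ) : 2 ≤ g (j + 1) / g j := by
  have hd : g (j + 1) / g j * g j = g (j + 1) := Nat.div_mul_cancel (hg.2.2 j)
  have hlt : g j < g (j + 1) := hg.1 (Nat.lt_succ_self j)
  have hp := g_pos hg j
  by_contra hle
  push_neg at hle
  interval_cases hq : (g (j + 1) / g j) <;> omega

lemma AG_pos {W : Set ℕ} {a : ℕ} (hg : GadicSeq g) (ha : a ∈ AG g W) : 1 ≤ a := by
  obtain ⟨F, x, hFne, -, hdig, rfl⟩ := ha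
  obtain ⟨j0, hj0⟩ := hFne
  calc 1 ≤ x j0 * g j0 := Nat.one_le_iff_ne_zero.2 (by
        have := (hdig j0 hj0).1; have := g_pos hg j0
        positivity)
    _ ≤ ∑ j ∈ F, x j * g j := Finset.single_le_sum (f := fun j => x j * g j) (fun i _ => Nat.zero_le _) hj0

/-- G-adic expansion. -/
lemma expand (hg : GadicSeq g) : ∀ n, 1 ≤ n → ∃ (F : Finset ℕ) (x : ℕ → ℕ), F.Nonempty ∧
    (∀ j ∈ F, 1 ≤ x j ∧ x j ≤ g (j + 1) / g j - 1) ∧ (∀ j ∈ F, g j ≤ n) ∧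
    n = ∑ j ∈ F, x j * g j := by
  intro n
  induction n using Nat.strong_induction_on with
  | _ n IH =>
  intro hn
  set m := Nat.findGreatest (fun m => g m ≤ n) n with hm
  have hgm : g m ≤ n := by
    have h0 : g 0 ≤ n := by rw [hg.2.1]; exact hn
    exact Nat.findGreatest_spec (P := fun m => g m ≤ n) (Nat.zero_le n) h0
  have hmn : m ≤ n := le_trans (hg.1.le_apply) hgm
  have hgm1 : n < g (m + 1) := by
    by_contra hcon
    push_neg at hcon
    have hm1n : m + 1 ≤ n := le_trans (hg.1.le_apply) hcon
    exact Nat.findGreatest_is_greatest (Nat.lt_succ_self m) hm1n hcon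
  have hgmpos : 0 < g m := g_pos hg m
  have hxm1 : 1 ≤ n / g m := Nat.one_le_div_iff hgmpos |>.2 hgm
  have hxm2 : n / g m ≤ g (m + 1) / g m - 1 := by
    have hd : g (m + 1) / g m * g m = g (m + 1) := Nat.div_mul_cancel (hg.2.2 m)
    have : n / g m < g (m + 1) / g m := (Nat.div_lt_iff_lt_mul hgmpos).2 (by rw [hd]; exact hgm1)
    omega
  have hmod : g m * (n / g m) + n % g m = n := Nat.div_add_mod n (g m)
  by_cases hr : n % g m = 0
  · refine ⟨{m}, fun _ => n / g m, singleton_nonempty m, ?_, ?_, ?_⟩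
    · intro j hj; rw [mem_singleton] at hj; subst hj; exact ⟨hxm1, hxm2⟩
    · intro j hj; rw [mem_singleton] at hj; subst hj; exact hgm
    · rw [Finset.sum_singleton, mul_comm]
      simpa [hr] using hmod.symm
  · have hrlt : n % g m < n := lt_of_lt_of_le (Nat.mod_lt n hgmpos) hgm
    obtain ⟨F', x', hF'ne, hdig', hle', hsum'⟩ := IH (n % g m) hrlt (Nat.one_le_iff_ne_zero.2 hr)
    have hmF' : m ∉ F' := by
      intro hmem
      have := hle' m hmem
      have := Nat.mod_lt n hgmpos
      omega
    refine ⟨insert m F', fun j => if j = m then n / g m else x' j, insert_nonempty m F', ?_, ?_, ?_⟩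
    · intro j hj
      rcases Finset.mem_insert.1 hj with rfl | hj'
      · simp [hxm1, hxm2]
      · have hne : j ≠ m := fun hjm => hmF' (hjm ▸ hj')
        simpa [hne] using hdig' j hj'
    · intro j hj
      rcases Finset.mem_insert.1 hj with rfl | hj'
      · exact hgm
      · exact le_trans (hle' j hj') (le_of_lt hrlt)
    · rw [Finset.sum_insert hmF']
      have : ∑ j ∈ F', (if j = m then n / g m else x' j) * g j = ∑ j ∈ F', x' j * g j := by
        apply Finset.sum_congr rfl
        intro j hj'
        have hne : j ≠ m := fun hjm => hmF' (hjm ▸ hj')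
        simp [hne]
      rw [this, ← hsum']
      have hb : (fun j => if j = m then n / g m else x' j) m = n / g m := by simp
      rw [hb, mul_comm (n / g m) (g m)]
      exact hmod.symm

end helpers


section main
variable {g : ℕ → ℕ} {h : ℕ} {W : Fin h → Set ℕ}

lemma single_mem (g : ℕ → ℕ) {Ws : Set ℕ} {j y : ℕ} (hj : j ∈ Ws) (h1 : 1 ≤ y)
    (h2 : y ≤ g (j + 1) / g j - 1) : y * g j ∈ AG g Ws :=
  ⟨{j}, fun _ => y, singleton_nonempty j, by simpa using hj,
    fun k hk => by rw [Finset.mem_singleton] at hk; subst hk; exact ⟨h1, h2⟩,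
    by rw [Finset.sum_singleton]⟩

/-- Any element ≥ 2 of `⋃ i, AG g (W i)` splits into two elements. -/
lemma split (hg : GadicSeq g) (hW3 : ⋃ i, W i = Set.univ) {a : ℕ}
    (ha : a ∈ ⋃ i, AG g (W i)) (ha2 : 2 ≤ a) :
    ∃ b c, b ∈ ⋃ i, AG g (W i) ∧ c ∈ ⋃ i, AG g (W i) ∧ a = b + c := by
  obtain ⟨i, hi⟩ := Set.mem_iUnion.1 ha
  obtain ⟨F, x, hFne, hFsub, hdig, rfl⟩ := hi
  obtain ⟨j0, hj0⟩ := hFne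
  have hj0W : j0 ∈ W i := hFsub (Finset.mem_coe.2 hj0)
  obtain ⟨hx1, hx2⟩ := hdig j0 hj0
  by_cases hE : (F.erase j0).Nonempty
  · refine ⟨x j0 * g j0, ∑ j ∈ F.erase j0, x j * g j, ?_, ?_, ?_⟩
    · exact Set.mem_iUnion.2 ⟨i, single_mem g hj0W hx1 hx2⟩
    · exact Set.mem_iUnion.2 ⟨i, ⟨F.erase j0, x, hE,
        fun j hj => hFsub (Finset.mem_coe.2 (Finset.mem_of_mem_erase (Finset.mem_coe.1 hj))),
        fun j hj => hdig j (Finset.mem_of_mem_erase hj), rfl⟩⟩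
    · exact (Finset.add_sum_erase F _ hj0).symm
  · -- F = {j0}
    have hFeq : F = {j0} := by
      apply Finset.eq_singleton_iff_unique_mem.2
      refine ⟨hj0, fun y hy => ?_⟩
      by_contra hne
      exact hE ⟨y, Finset.mem_erase.2 ⟨hne, hy⟩⟩
    subst hFeq
    rw [Finset.sum_singleton] at ha2 ⊢
    by_cases hx : 2 ≤ x j0
    · refine ⟨1 * g j0, (x j0 - 1) * g j0, ?_, ?_, ?_⟩
      · exact Set.mem_iUnion.2 ⟨i, single_mem g hj0W le_rfl (by omega)⟩
      · exact Set.mem_iUnion.2 ⟨i, single_mem g hj0W (by omega) (by omega)⟩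
      · rw [← add_mul]
        congr 1
        omega
    · -- x j0 = 1, so a = g j0 ≥ 2, hence j0 = j' + 1
      have hx1' : x j0 = 1 := by omega
      rw [hx1', one_mul] at ha2 ⊢
      obtain ⟨j', rfl⟩ : ∃ j', j0 = j' + 1 := by
        cases j0 with
        | zero => rw [hg.2.1] at ha2; omega
        | succ j' => exact ⟨j', rfl⟩
      obtain ⟨i', hi'⟩ : ∃ i', j' ∈ W i' := by
        have : j' ∈ ⋃ i, W i := hW3 ▸ Set.mem_univ j'
        exact Set.mem_iUnion.1 this
      have hd2 := d_two hg j'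
      refine ⟨1 * g j', (g (j' + 1) / g j' - 1) * g j', ?_, ?_, ?_⟩
      · exact Set.mem_iUnion.2 ⟨i', single_mem g hi' le_rfl (by omega)⟩
      · exact Set.mem_iUnion.2 ⟨i', single_mem g hi' (by omega) le_rfl⟩
      · have hd : g (j' + 1) / g j' * g j' = g (j' + 1) := Nat.div_mul_cancel (hg.2.2 j')
        rw [← add_mul]
        have h1d : 1 + (g (j' + 1) / g j' - 1) = g (j' + 1) / g j' := by omega
        rw [h1d, hd]

end main

section elim
variable {h : ℕ} (A : Set ℕ)

/-- Replace zeros in a representation, given positivity and splittability of `A`. -/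
lemma elim_zeros (hpos : ∀ a ∈ A, 1 ≤ a)
    (hsplit : ∀ a ∈ A, 2 ≤ a → ∃ b c, b ∈ A ∧ c ∈ A ∧ a = b + c) :
    ∀ z (f : Fin h → ℕ), (∀ i, f i = 0 ∨ f i ∈ A) →
      ((univ.filter (fun i => f i = 0)).card ≤ z) → h ≤ ∑ i, f i →
      ∃ f' : Fin h → ℕ, (∀ i, f' i ∈ A) ∧ ∑ i, f' i = ∑ i, f i := by
  intro z
  induction z with
  | zero =>
    intro f hmem hcard _
    refine ⟨f, fun i => ?_, rfl⟩
    rcases hmem i with h0 | hA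
    · exfalso
      have : i ∈ univ.filter (fun i => f i = 0) := by simp [h0]
      have := Finset.card_pos.2 ⟨i, this⟩
      omega
    · exact hA
  | succ z IH =>
    intro f hmem hcard hsum
    by_cases hz : ∀ i, f i ≠ 0
    · refine ⟨f, fun i => ?_, rfl⟩
      rcases hmem i with h0 | hA
      · exact absurd h0 (hz i)
      · exact hA
    · push_neg at hz
      obtain ⟨i1, hi1⟩ := hz
      -- find an element ≥ 2
      have hbig : ∃ i0, 2 ≤ f i0 := by
        by_contra hcon
        push_neg at hcon
        have hb : ∑ i, f i ≤ ∑ i ∈ univ.erase i1, f i := by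
          rw [← Finset.add_sum_erase _ f (mem_univ i1), hi1, zero_add]
        have hb2 : ∑ i ∈ univ.erase i1, f i ≤ ∑ i ∈ univ.erase i1, 1 :=
          Finset.sum_le_sum (fun i _ => by have := hcon i; omega)
        rw [Finset.sum_const, smul_eq_mul, mul_one, Finset.card_erase_of_mem (mem_univ i1),
          Finset.card_univ, Fintype.card_fin] at hb2
        have hh1 : 1 ≤ h := Nat.pos_of_ne_zero (fun h0 => by subst h0; exact i1.elim0)
        omega
      obtain ⟨i0, hi0⟩ := hbig
      have hne : i0 ≠ i1 := fun he => by rw [he, hi1] at hi0; omega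
      have hfA : f i0 ∈ A := by
        rcases hmem i0 with h0 | hA
        · omega
        · exact hA
      obtain ⟨b, c, hb, hc, hbc⟩ := hsplit (f i0) hfA hi0
      have hbpos := hpos b hb
      have hcpos := hpos c hc
      set f2 : Fin h → ℕ := Function.update (Function.update f i0 c) i1 b with hf2
      have hval : ∀ i, f2 i = if i = i1 then b else if i = i0 then c else f i := by
        intro i
        by_cases h1 : i = i1
        · subst h1; simp [hf2, Function.update]
        · by_cases h0 : i = i0
          · subst h0; simp [hf2, Function.update, h1]
          · simp [hf2, Function.update, h1, h0]
      have hi0' : i0 ∈ (univ : Finset (Fin h)) \ {i1} := by simp [hne]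
      have hsum2 : ∑ i, f2 i = ∑ i, f i := by
        have e1 : ∑ i, f2 i = b + ∑ i ∈ univ \ {i1}, Function.update f i0 c i :=
          Finset.sum_update_of_mem (mem_univ i1) _ _
        have e2 : ∑ i ∈ univ \ {i1}, Function.update f i0 c i
            = c + ∑ i ∈ (univ \ {i1}) \ {i0}, f i :=
          Finset.sum_update_of_mem hi0' _ _
        have e3 : ∑ i, f i = f i1 + ∑ i ∈ univ \ {i1}, f i :=
          Finset.sum_eq_add_sum_sdiff_singleton_of_mem (mem_univ i1) f
        have e4 : ∑ i ∈ univ \ {i1}, f i = f i0 + ∑ i ∈ (univ \ {i1}) \ {i0}, f i :=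
          Finset.sum_eq_add_sum_sdiff_singleton_of_mem hi0' f
        omega
      have hsub : univ.filter (fun i => f2 i = 0) ⊆ (univ.filter (fun i => f i = 0)).erase i1 := by
        intro i hi
        simp only [mem_filter, mem_univ, true_and] at hi
        rw [hval i] at hi
        by_cases h1 : i = i1
        · rw [if_pos h1] at hi; omega
        · rw [if_neg h1] at hi
          by_cases h0 : i = i0
          · rw [if_pos h0] at hi; omega
          · rw [if_neg h0] at hi
            exact Finset.mem_erase.2 ⟨h1, Finset.mem_filter.2 ⟨mem_univ _, hi⟩⟩
      have hcard2 : (univ.filter (fun i => f2 i = 0)).card ≤ z := by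
        have h1 : i1 ∈ univ.filter (fun i => f i = 0) := by simp [hi1]
        have := Finset.card_le_card hsub
        rw [Finset.card_erase_of_mem h1] at this
        have := Finset.card_pos.2 ⟨i1, h1⟩
        omega
      obtain ⟨f', hf'A, hf'sum⟩ := IH f2
        (fun i => by rw [hval i]; split <;> [exact Or.inr hb; skip]; split <;>
          [exact Or.inr hc; exact hmem i])
        hcard2 (by rw [hsum2]; exact hsum)
      exact ⟨f', hf'A, by rw [hf'sum, hsum2]⟩

end elim

theorem gadic_basis_with_zero_not_minimal (h : ℕ) (hh : 2 ≤ h) (g : ℕ → ℕ) (hg : GadicSeq g)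
    (W : Fin h → Set ℕ) (hW1 : ∀ i, (W i).Nonempty)
    (hW2 : ∀ i j, i ≠ j → Disjoint (W i) (W j))
    (hW3 : ⋃ i, W i = Set.univ) :
    ¬ MinAsympBasis h ({0} ∪ ⋃ i, AG g (W i)) ∧
      AsympBasis h (({0} ∪ ⋃ i, AG g (W i)) \ {0}) := by
  classical
  set A' : Set ℕ := ⋃ i, AG g (W i) with hA'
  have hpos : ∀ a ∈ A', 1 ≤ a := fun a ha => by
    obtain ⟨i, hi⟩ := Set.mem_iUnion.1 ha
    exact AG_pos hg hi
  have hsplit : ∀ a ∈ A', 2 ≤ a → ∃ b c, b ∈ A' ∧ c ∈ A' ∧ a = b + c :=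
    fun a ha ha2 => split hg hW3 ha ha2
  have hc : ∀ j : ℕ, ∃ i, j ∈ W i := fun j => Set.mem_iUnion.1 (hW3 ▸ Set.mem_univ j)
  choose c hcW using hc
  have hbasis : AsympBasis h A' := by
    refine ⟨h, fun n hn => ?_⟩
    have hn1 : 1 ≤ n := by omega
    obtain ⟨F, x, hFne, hdig, hle, hsum⟩ := expand hg n hn1
    set f : Fin h → ℕ := fun i => ∑ j ∈ F.filter (fun j => c j = i), x j * g j with hf
    have hsumf : ∑ i, f i = n := by
      rw [hf]
      rw [Finset.sum_fiberwise F c (fun j => x j * g j)]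
      exact hsum.symm
    have hmem : ∀ i, f i = 0 ∨ f i ∈ A' := by
      intro i
      by_cases hne : (F.filter (fun j => c j = i)).Nonempty
      · right
        refine Set.mem_iUnion.2 ⟨i, ⟨F.filter (fun j => c j = i), x, hne, ?_, ?_, rfl⟩⟩
        · intro j hj
          rw [Finset.mem_coe, Finset.mem_filter] at hj
          exact hj.2 ▸ hcW j
        · intro j hj
          exact hdig j (Finset.filter_subset _ F hj)
      · left
        rw [Finset.not_nonempty_iff_eq_empty] at hne
        rw [hf]
        simp [hne]
    have hcard : (univ.filter (fun i => f i = 0)).card ≤ h := by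
      calc (univ.filter (fun i => f i = 0)).card ≤ (univ : Finset (Fin h)).card :=
            Finset.card_le_card (Finset.filter_subset _ _)
        _ = h := by rw [Finset.card_univ, Fintype.card_fin]
    obtain ⟨f', hf'A, hf'sum⟩ := elim_zeros A' hpos hsplit h f hmem hcard
      (by rw [hsumf]; exact hn)
    exact ⟨f', hf'A, (hf'sum.trans hsumf).symm⟩
  have hAeq : ({0} ∪ A') \ {0} = A' := by
    ext a
    simp only [Set.mem_diff, Set.mem_union, Set.mem_singleton_iff]
    constructor
    · rintro ⟨h1 | h1, h2⟩
      · exact absurd h1 h2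
      · exact h1
    · intro ha
      exact ⟨Or.inr ha, fun h0 => by have := hpos a ha; omega⟩
  constructor
  · rintro ⟨-, hmin⟩
    refine hmin (({0} ∪ A') \ {0}) ?_ (by rw [hAeq]; exact hbasis)
    rw [Set.ssubset_def]
    constructor
    · exact Set.diff_subset
    · intro hsub
      have h0 : (0:ℕ) ∈ ({0} : Set ℕ) ∪ A' := Or.inl rfl
      exact (hsub h0).2 rfl
  · rw [hAeq]
    exact hbasis
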